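/- Let n ≥ 2 and let A be a symmetric nonsingular n×n 0–1 matrix such that A⁻¹ is equimodular with constant diagonal, i.e., A⁻¹ ∈ {−α,α}^{n×n} with all diagonal entries of A⁻¹ equal. Then all principal minors of A of order n−2 are zero, i.e., det(A(μ)) = 0 for every μ ⊆ [n] with |μ| = 2. -/

import Mathlib

open Matrix Finset

theorem stmt19 {n : ℕ} (hn : 2 ≤ n) (A : Matrix (Fin n) (Fin n) ℝ)
    (hsym : A.IsSymm) (hA : IsUnit A.det)
    (h01 : ∀ i j, A i j = 0 ∨ A i j = 1)
    (α : ℝ) (hequi : ∀ i j, A⁻¹ i j = α ∨ A⁻¹ i j = -α)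
    (hconst : ∀ i j, A⁻¹ i i = A⁻¹ j j) :
    ∀ μ : Finset (Fin n), μ.card = n - 2 →
      (A.submatrix (fun x : μ => (x : Fin n)) (fun x : μ => (x : Fin n))).det = 0 := by
  intro μ hμ
  classical
  -- A⁻¹ is symmetric
  have hinvsym : (A⁻¹).IsSymm := by
    unfold Matrix.IsSymm
    rw [Matrix.transpose_nonsing_inv, hsym.eq]
  -- the reindexing equivalence
  set e : {x : Fin n // x ∈ μ} ⊕ {x : Fin n // x ∉ μ} ≃ Fin n :=
    Equiv.sumCompl (· ∈ μ) with he
  set M : Matrix _ _ ℝ := A.submatrix e e with hM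
  have hMunit : IsUnit M.det := by
    rwa [hM, Matrix.det_submatrix_equiv_self]
  have hMinv : M⁻¹ = (A⁻¹).submatrix e e := by
    rw [hM, Matrix.inv_submatrix_equiv]
  have hMM : M * M⁻¹ = 1 := Matrix.mul_nonsing_inv M hMunit
  -- block decomposition
  have hMblocks : M = Matrix.fromBlocks M.toBlocks₁₁ M.toBlocks₁₂ M.toBlocks₂₁ M.toBlocks₂₂ :=
    (Matrix.fromBlocks_toBlocks M).symm
  set N := M⁻¹ with hN
  have hNblocks : N = Matrix.fromBlocks N.toBlocks₁₁ N.toBlocks₁₂ N.toBlocks₂₁ N.toBlocks₂₂ :=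
    (Matrix.fromBlocks_toBlocks N).symm
  -- key product identity
  have key : M * Matrix.fromBlocks 1 N.toBlocks₁₂ 0 N.toBlocks₂₂
      = Matrix.fromBlocks M.toBlocks₁₁ 0 M.toBlocks₂₁ 1 := by
    have h1 : (1 : Matrix ({x : Fin n // x ∈ μ} ⊕ {x : Fin n // x ∉ μ})
        ({x : Fin n // x ∈ μ} ⊕ {x : Fin n // x ∉ μ}) ℝ)
        = Matrix.fromBlocks 1 0 0 1 := by
      ext (i | i) (j | j) <;>
        simp [Matrix.one_apply, Matrix.fromBlocks, Sum.inl.injEq, Sum.inr.injEq]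
    have hprod : M * N = 1 := hMM
    rw [hMblocks] at hprod ⊢
    rw [hNblocks] at hprod
    rw [Matrix.fromBlocks_multiply] at hprod ⊢
    rw [h1] at hprod
    have e12 : M.toBlocks₁₁ * N.toBlocks₁₂ + M.toBlocks₁₂ * N.toBlocks₂₂ = 0 := by
      have := congrArg Matrix.toBlocks₁₂ hprod
      simpa only [Matrix.toBlocks_fromBlocks₁₂] using this
    have e22 : M.toBlocks₂₁ * N.toBlocks₁₂ + M.toBlocks₂₂ * N.toBlocks₂₂ = 1 := by
      have := congrArg Matrix.toBlocks₂₂ hprod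
      simpa only [Matrix.toBlocks_fromBlocks₂₂] using this
    congr 1 <;> simp [e12, e22, Matrix.mul_one, Matrix.mul_zero]
  -- take determinants
  have hdet : M.det * N.toBlocks₂₂.det = M.toBlocks₁₁.det := by
    have := congrArg Matrix.det key
    rwa [Matrix.det_mul, Matrix.det_fromBlocks_zero₂₁, Matrix.det_fromBlocks_zero₁₂,
      Matrix.det_one, Matrix.det_one, one_mul, mul_one] at this
  -- the complementary block of A⁻¹ has determinant 0
  have hcard : Fintype.card {x : Fin n // x ∉ μ} = 2 := by
    have h1 : Fintype.card {x : Fin n // x ∈ μ} = μ.card := Fintype.card_coe μ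
    have h2 : Fintype.card {x : Fin n // x ∉ μ} =
        Fintype.card (Fin n) - Fintype.card {x : Fin n // x ∈ μ} :=
      Fintype.card_subtype_compl _
    rw [h2, h1, hμ, Fintype.card_fin]
    omega
  have hzero : N.toBlocks₂₂.det = 0 := by
    obtain ⟨f⟩ := Fintype.truncEquivFinOfCardEq hcard
    have : N.toBlocks₂₂.det = (N.toBlocks₂₂.submatrix f.symm f.symm).det := by
      rw [Matrix.det_submatrix_equiv_self]
    rw [this, Matrix.det_fin_two]
    set i := f.symm 0 with hi
    set j := f.symm 1 with hj
    have hval : ∀ (a b : {x : Fin n // x ∉ μ}),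
        N.toBlocks₂₂ a b = A⁻¹ (e (Sum.inr a)) (e (Sum.inr b)) := by
      intro a b
      rw [show N.toBlocks₂₂ a b = N (Sum.inr a) (Sum.inr b) from rfl, hMinv]
      rfl
    simp only [Matrix.submatrix_apply]
    rw [hval i i, hval i j, hval j i, hval j j]
    set a := e (Sum.inr i)
    set b := e (Sum.inr j)
    have hd : A⁻¹ a a = A⁻¹ b b := hconst a b
    have hs : A⁻¹ a b = A⁻¹ b a := by
      have := congrFun (congrFun hinvsym.eq a) b
      simpa [Matrix.transpose_apply] using this.symm
    rcases hequi a a with h1 | h1 <;> rcases hequi a b with h2 | h2 <;>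
      rw [h1, h2, ← hd, ← hs, h1, h2] <;> ring
  -- conclude
  have htarget : (A.submatrix (fun x : μ => (x : Fin n)) (fun x : μ => (x : Fin n)))
      = M.toBlocks₁₁ := by
    ext i j
    simp [hM, Matrix.toBlocks₁₁, he, Matrix.submatrix_apply]
  rw [htarget, ← hdet, hzero, mul_zero]
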